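/- Fix κ² > 0 and define h : (0,∞) → ℝ by h(α) := (1/2π) ∫_{−π}^{π} ( α² + κ² sin²x )^{−1/2} dx. Then h is strictly decreasing on (0,∞), h(α) → +∞ as α → 0⁺, and h(α) → 0 as α → +∞. -/

import Mathlib

open Real Set MeasureTheory Filter

/-- The function `h(α) = (1/2π) ∫_{−π}^{π} (α² + κ² sin²x)^{−1/2} dx`. -/
noncomputable def alphaIntegral (κ : ℝ) (α : ℝ) : ℝ :=
  (1 / (2 * π)) * ∫ x in (-π)..π, 1 / Real.sqrt (α ^ 2 + κ ^ 2 * Real.sin x ^ 2)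

lemma alphaAux_pos (κ α : ℝ) (hα : 0 < α) (x : ℝ) :
    0 < α ^ 2 + κ ^ 2 * Real.sin x ^ 2 :=
  lt_of_lt_of_le (by positivity) (le_add_of_nonneg_right (by positivity))

lemma alphaAux_cont (κ α : ℝ) (hα : 0 < α) :
    Continuous fun x => 1 / Real.sqrt (α ^ 2 + κ ^ 2 * Real.sin x ^ 2) := by
  apply continuous_const.div
  · exact (continuous_const.add ((continuous_const.mul
      ((Real.continuous_sin).pow 2)))).sqrt
  · intro x
    exact ne_of_gt (Real.sqrt_pos.2 (alphaAux_pos κ α hα x))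

/-- **Monotonicity and limits of `h`**: for `κ² > 0`, the function
`h(α) = (1/2π) ∫_{−π}^{π} (α² + κ² sin²x)^{−1/2} dx` is strictly decreasing on
`(0, ∞)`, tends to `+∞` as `α → 0⁺`, and tends to `0` as `α → +∞`. -/
theorem alphaIntegral_strictAnti_and_limits (κ : ℝ) (hκ : 0 < κ ^ 2) :
    StrictAntiOn (alphaIntegral κ) (Ioi 0) ∧
    Tendsto (alphaIntegral κ) (nhdsWithin 0 (Ioi 0)) atTop ∧
    Tendsto (alphaIntegral κ) atTop (nhds 0) := by
  have hπ : (0:ℝ) < π := Real.pi_pos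
  have hcoef : (0:ℝ) < 1 / (2 * π) := by positivity
  set F : ℝ → ℝ → ℝ := fun α x => 1 / Real.sqrt (α ^ 2 + κ ^ 2 * Real.sin x ^ 2) with hF
  have hInt : ∀ α, 0 < α → ∀ a b : ℝ, IntervalIntegrable (F α) volume a b := fun α hα a b =>
    (alphaAux_cont κ α hα).intervalIntegrable a b
  refine ⟨?_, ?_, ?_⟩
  · -- strict antitone
    intro a ha b hb hab
    simp only [mem_Ioi] at ha hb
    unfold alphaIntegral
    have key : 0 < ∫ x in (-π)..π, (F a x - F b x) := by
      apply intervalIntegral.intervalIntegral_pos_of_pos ((hInt a ha _ _).sub (hInt b hb _ _))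
      · intro x
        have h1 := alphaAux_pos κ a ha x
        have h2 := alphaAux_pos κ b hb x
        have : Real.sqrt (a ^ 2 + κ ^ 2 * Real.sin x ^ 2)
            < Real.sqrt (b ^ 2 + κ ^ 2 * Real.sin x ^ 2) := by
          apply Real.sqrt_lt_sqrt h1.le
          have : a ^ 2 < b ^ 2 := by nlinarith
          linarith
        have := one_div_lt_one_div_of_lt (Real.sqrt_pos.2 h1) this
        simpa [hF] using sub_pos.2 this
      · linarith
    rw [intervalIntegral.integral_sub (hInt a ha _ _) (hInt b hb _ _)] at key
    exact mul_lt_mul_of_pos_left (by linarith) hcoef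
  · -- tends to +∞ as α → 0⁺
    set c : ℝ := |κ| with hc
    have hcpos : 0 < c := abs_pos.2 (by intro h; rw [h] at hκ; simp at hκ)
    -- lower bound: alphaIntegral κ α ≥ (1/(2π)) * c⁻¹ * log ((α + c*(π/2))/α)
    have hlow : ∀ α : ℝ, 0 < α →
        (1 / (2 * π)) * (c⁻¹ * Real.log ((c * (π/2) + α) / α)) ≤ alphaIntegral κ α := by
      intro α hα
      have hden : ∀ x, 0 ≤ x → F α x ≥ 1 / (c * x + α) := by
        intro x hxnn
        have hx0 : 0 < c * x + α := by positivity
        apply one_div_le_one_div_of_le (Real.sqrt_pos.2 (alphaAux_pos κ α hα x))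
        rw [show c * x + α = Real.sqrt ((c * x + α)^2) from
          (Real.sqrt_sq hx0.le).symm]
        apply Real.sqrt_le_sqrt
        have hsin : Real.sin x ^ 2 ≤ x ^ 2 := Real.sin_sq_le_sq
        have hκc : κ ^ 2 = c ^ 2 := (sq_abs κ).symm
        nlinarith [mul_le_mul_of_nonneg_left hsin (sq_nonneg κ),
          mul_nonneg (mul_nonneg hcpos.le hxnn) hα.le]
      -- ∫_0^{π/2} 1/(c x + α) = c⁻¹ log((c (π/2) + α)/α)
      have hInt2 : ∀ a b : ℝ, 0 ≤ a → IntervalIntegrable (fun x => 1 / (c * x + α)) volume a b ∨ True := fun _ _ _ => Or.inr trivial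
      have hcont2 : ContinuousOn (fun x : ℝ => 1 / (c * x + α)) (Icc 0 (π/2)) := by
        apply ContinuousOn.div continuousOn_const
          ((continuousOn_const.mul continuousOn_id).add continuousOn_const)
        intro x hx
        have : 0 < c * x + α := by
          have := hx.1; positivity
        exact this.ne'
      have hii2 : IntervalIntegrable (fun x => 1 / (c * x + α)) volume 0 (π/2) := by
        apply ContinuousOn.intervalIntegrable
        rwa [uIcc_of_le (by linarith)]
      have hval : ∫ x in (0:ℝ)..(π/2), 1 / (c * x + α)
          = c⁻¹ * Real.log ((c * (π/2) + α) / α) := by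
        have := intervalIntegral.mul_integral_comp_mul_add (a := (0:ℝ)) (b := π/2)
          (f := fun u => 1 / u) c α
        rw [mul_zero, zero_add] at this
        rw [← intervalIntegral.integral_const_mul] at this
        have hlog : ∫ x in α..(c * (π/2) + α), 1 / x
            = Real.log ((c * (π/2) + α) / α) := by
          apply integral_one_div
          intro h
          rcases h with ⟨h1, _⟩
          change min α (c * (π/2) + α) ≤ 0 at h1
          have : 0 < min α (c * (π/2) + α) := lt_min hα (by positivity)
          linarith
        rw [hlog] at this
        rw [← this, intervalIntegral.integral_const_mul, inv_mul_cancel_left₀ hcpos.ne']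
      have step1 : ∫ x in (0:ℝ)..(π/2), 1 / (c * x + α)
          ≤ ∫ x in (0:ℝ)..(π/2), F α x := by
        apply intervalIntegral.integral_mono_on (by linarith) hii2 (hInt α hα _ _)
        intro x hx
        exact hden x hx.1
      have step2 : ∫ x in (0:ℝ)..(π/2), F α x ≤ ∫ x in (-π)..π, F α x := by
        apply intervalIntegral.integral_mono_interval (by linarith) (by linarith) (by linarith)
        · filter_upwards with x
          exact le_of_lt (by positivity)
        · exact hInt α hα _ _
      unfold alphaIntegral
      rw [← hval]
      exact mul_le_mul_of_nonneg_left (step1.trans step2) hcoef.le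
    -- the lower bound tends to +∞
    have hlim : Tendsto (fun α => (1 / (2 * π)) * (c⁻¹ * Real.log ((c * (π/2) + α) / α)))
        (nhdsWithin 0 (Ioi 0)) atTop := by
      apply Tendsto.const_mul_atTop hcoef
      apply Tendsto.const_mul_atTop (inv_pos.2 hcpos)
      apply Real.tendsto_log_atTop.comp
      have hinv : Tendsto (fun α : ℝ => α⁻¹) (nhdsWithin 0 (Ioi 0)) atTop :=
        tendsto_inv_nhdsGT_zero
      have h2 : Tendsto (fun α : ℝ => (c * (π/2)) * α⁻¹ + 1) (nhdsWithin 0 (Ioi 0)) atTop :=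
        (hinv.const_mul_atTop (by positivity)).atTop_add tendsto_const_nhds
      apply h2.congr'
      filter_upwards [self_mem_nhdsWithin] with α (hα : 0 < α)
      field_simp
    apply tendsto_atTop_mono' _ _ hlim
    filter_upwards [self_mem_nhdsWithin] with α hα
    exact hlow α hα
  · -- tends to 0 at +∞
    have hub : ∀ α : ℝ, 0 < α → alphaIntegral κ α ≤ 1 / α := by
      intro α hα
      unfold alphaIntegral
      have hFle : ∀ x ∈ Icc (-π) π, F α x ≤ 1 / α := by
        intro x _
        apply one_div_le_one_div_of_le hα
        rw [show α = Real.sqrt (α^2) from (Real.sqrt_sq hα.le).symm]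
        apply Real.sqrt_le_sqrt
        nlinarith [sq_nonneg (Real.sin x), sq_nonneg κ, Real.sqrt_sq hα.le,
          mul_nonneg (sq_nonneg κ) (sq_nonneg (Real.sin x))]
      have : ∫ x in (-π)..π, F α x ≤ ∫ x in (-π)..π, (1/α : ℝ) := by
        apply intervalIntegral.integral_mono_on (by linarith) (hInt α hα _ _)
          (intervalIntegrable_const) hFle
      rw [intervalIntegral.integral_const] at this
      calc (1 / (2 * π)) * ∫ x in (-π)..π, F α x
          ≤ (1 / (2 * π)) * ((π - -π) • (1/α)) := mul_le_mul_of_nonneg_left this hcoef.le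
        _ = 1 / α := by
              have h1 : π ≠ 0 := hπ.ne'
              have h2 : α ≠ 0 := hα.ne'
              rw [smul_eq_mul]
              field_simp
              norm_num
    have hnn : ∀ α : ℝ, 0 < α → 0 ≤ alphaIntegral κ α := by
      intro α hα
      unfold alphaIntegral
      apply mul_nonneg hcoef.le
      apply intervalIntegral.integral_nonneg (by linarith)
      intro x _
      positivity
    apply squeeze_zero' (Filter.eventually_atTop.2 ⟨1, fun α hα => hnn α (by linarith)⟩)
      (Filter.eventually_atTop.2 ⟨1, fun α hα => hub α (by linarith)⟩)
    exact tendsto_inv_atTop_zero.congr fun x => (one_div x).symm
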